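/- arXiv:1910.08653 — 2 statements merged into one kernel-verified Lean document; each statement's English description precedes it below -/
import Mathlib

section
/- Let T = (0,0,0,0,0,0,f₁,f₂,f₃,f₄,t₁,t₂) and T′ = (0,0,0,0,0,0,f₁′,f₂′,f₃′,f₄′,t₁′,t₂′) be tuples in ℤ¹² with all c-coordinates zero. Then T and T′ are ψ-equivalent if and only if: fᵢ = fᵢ′ for i = 1,2,3,4, t₁ ≡ t₁′ (mod gcd(f₁,f₂,f₃,f₄)) and t₂ ≡ t₂′ (mod gcd(f₁,f₂,f₃,f₄)); here when f₁ = f₂ = f₃ = f₄ = 0 the congruences mean t₁ = t₁′ and t₂ = t₂′. -/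
/-- A 12-tuple of integers, with coordinates written `(c₁,…,c₆,f₁,…,f₄,t₁,t₂)`. -/
structure Tuple : Type where
  c1 : ℤ
  c2 : ℤ
  c3 : ℤ
  c4 : ℤ
  c5 : ℤ
  c6 : ℤ
  f1 : ℤ
  f2 : ℤ
  f3 : ℤ
  f4 : ℤ
  t1 : ℤ
  t2 : ℤ

/-- The move ψ₂₁ : f₃↦f₃+c₅, f₄↦f₄−c₁, t₁↦t₁+f₁. -/
def psi21 : Equiv.Perm Tuple where
  toFun x := { x with f3 := x.f3 + x.c5, f4 := x.f4 - x.c1, t1 := x.t1 + x.f1 }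
  invFun x := { x with f3 := x.f3 - x.c5, f4 := x.f4 + x.c1, t1 := x.t1 - x.f1 }
  left_inv x := by cases x; simp
  right_inv x := by cases x; simp

/-- The move ψ₄₁ : f₂↦f₂+c₆, f₃↦f₃−c₅, t₂↦t₂−f₁. -/
def psi41 : Equiv.Perm Tuple where
  toFun x := { x with f2 := x.f2 + x.c6, f3 := x.f3 - x.c5, t2 := x.t2 - x.f1 }
  invFun x := { x with f2 := x.f2 - x.c6, f3 := x.f3 + x.c5, t2 := x.t2 + x.f1 }
  left_inv x := by cases x; simp
  right_inv x := by cases x; simp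

/-- The move ψ₁₂ : f₃↦f₃−c₄, f₄↦f₄+c₂, t₁↦t₁+f₂. -/
def psi12 : Equiv.Perm Tuple where
  toFun x := { x with f3 := x.f3 - x.c4, f4 := x.f4 + x.c2, t1 := x.t1 + x.f2 }
  invFun x := { x with f3 := x.f3 + x.c4, f4 := x.f4 - x.c2, t1 := x.t1 - x.f2 }
  left_inv x := by cases x; simp
  right_inv x := by cases x; simp

/-- The move ψ₃₂ : f₁↦f₁+c₆, f₄↦f₄−c₂, t₂↦t₂−f₂. -/
def psi32 : Equiv.Perm Tuple where
  toFun x := { x with f1 := x.f1 + x.c6, f4 := x.f4 - x.c2, t2 := x.t2 - x.f2 }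
  invFun x := { x with f1 := x.f1 - x.c6, f4 := x.f4 + x.c2, t2 := x.t2 + x.f2 }
  left_inv x := by cases x; simp
  right_inv x := by cases x; simp

/-- The move ψ₄₃ : f₁↦f₁+c₅, f₂↦f₂−c₄, t₁↦t₁+f₃. -/
def psi43 : Equiv.Perm Tuple where
  toFun x := { x with f1 := x.f1 + x.c5, f2 := x.f2 - x.c4, t1 := x.t1 + x.f3 }
  invFun x := { x with f1 := x.f1 - x.c5, f2 := x.f2 + x.c4, t1 := x.t1 - x.f3 }
  left_inv x := by cases x; simp
  right_inv x := by cases x; simp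

/-- The move ψ₂₃ : f₁↦f₁−c₅, f₄↦f₄+c₃, t₂↦t₂−f₃. -/
def psi23 : Equiv.Perm Tuple where
  toFun x := { x with f1 := x.f1 - x.c5, f4 := x.f4 + x.c3, t2 := x.t2 - x.f3 }
  invFun x := { x with f1 := x.f1 + x.c5, f4 := x.f4 - x.c3, t2 := x.t2 + x.f3 }
  left_inv x := by cases x; simp
  right_inv x := by cases x; simp

/-- The move ψ₃₄ : f₁↦f₁−c₁, f₂↦f₂+c₂, t₁↦t₁+f₄. -/
def psi34 : Equiv.Perm Tuple where
  toFun x := { x with f1 := x.f1 - x.c1, f2 := x.f2 + x.c2, t1 := x.t1 + x.f4 }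
  invFun x := { x with f1 := x.f1 + x.c1, f2 := x.f2 - x.c2, t1 := x.t1 - x.f4 }
  left_inv x := by cases x; simp
  right_inv x := by cases x; simp

/-- The move ψ₁₄ : f₂↦f₂−c₂, f₃↦f₃+c₃, t₂↦t₂−f₄. -/
def psi14 : Equiv.Perm Tuple where
  toFun x := { x with f2 := x.f2 - x.c2, f3 := x.f3 + x.c3, t2 := x.t2 - x.f4 }
  invFun x := { x with f2 := x.f2 + x.c2, f3 := x.f3 - x.c3, t2 := x.t2 + x.f4 }
  left_inv x := by cases x; simp
  right_inv x := by cases x; simp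

/-- The list of the eight ψ-moves. -/
def psiMoves : List (Equiv.Perm Tuple) :=
  [psi21, psi41, psi12, psi32, psi43, psi23, psi34, psi14]

/-- Two tuples are ψ-equivalent if one is obtained from the other by a finite
composition of the eight ψ-moves and their inverses, i.e. they are related by the
equivalence relation generated by single applications of the moves. -/
def PsiEquiv : Tuple → Tuple → Prop :=
  Relation.EqvGen (fun x y => ∃ g ∈ psiMoves, g x = y)

namespace PsiAux

/-- Tuple with all c's zero. -/
def F (a1 a2 a3 a4 u v : ℤ) : Tuple := ⟨0, 0, 0, 0, 0, 0, a1, a2, a3, a4, u, v⟩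

lemma rel_of_move {x y : Tuple} {g : Equiv.Perm Tuple} (hg : g ∈ psiMoves) (h : g x = y) :
    PsiEquiv x y := Relation.EqvGen.rel _ _ ⟨g, hg, h⟩

lemma shift1 (a1 a2 a3 a4 : ℤ) {g : Equiv.Perm Tuple} (hg : g ∈ psiMoves) (d : ℤ)
    (hact : ∀ u v, g (F a1 a2 a3 a4 u v) = F a1 a2 a3 a4 (u + d) v) (k u v : ℤ) :
    PsiEquiv (F a1 a2 a3 a4 u v) (F a1 a2 a3 a4 (u + k * d) v) := by
  induction k using Int.induction_on with
  | zero => simpa [PsiEquiv] using Relation.EqvGen.refl (F a1 a2 a3 a4 u v)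
  | succ n ih =>
      refine Relation.EqvGen.trans _ _ _ ih (rel_of_move hg ?_)
      rw [hact, show u + (n : ℤ) * d + d = u + ((n : ℤ) + 1) * d by ring]
  | pred n ih =>
      refine Relation.EqvGen.trans _ _ _ ih
        (Relation.EqvGen.symm _ _ (rel_of_move hg ?_))
      rw [hact, show u + (-(n : ℤ) - 1) * d + d = u + (-(n : ℤ)) * d by ring]

lemma shift2 (a1 a2 a3 a4 : ℤ) {g : Equiv.Perm Tuple} (hg : g ∈ psiMoves) (d : ℤ)
    (hact : ∀ u v, g (F a1 a2 a3 a4 u v) = F a1 a2 a3 a4 u (v + d)) (k u v : ℤ) :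
    PsiEquiv (F a1 a2 a3 a4 u v) (F a1 a2 a3 a4 u (v + k * d)) := by
  induction k using Int.induction_on with
  | zero => simpa [PsiEquiv] using Relation.EqvGen.refl (F a1 a2 a3 a4 u v)
  | succ n ih =>
      refine Relation.EqvGen.trans _ _ _ ih (rel_of_move hg ?_)
      rw [hact, show v + (n : ℤ) * d + d = v + ((n : ℤ) + 1) * d by ring]
  | pred n ih =>
      refine Relation.EqvGen.trans _ _ _ ih
        (Relation.EqvGen.symm _ _ (rel_of_move hg ?_))
      rw [hact, show v + (-(n : ℤ) - 1) * d + d = v + (-(n : ℤ)) * d by ring]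

lemma act21 (a1 a2 a3 a4 u v : ℤ) :
    psi21 (F a1 a2 a3 a4 u v) = F a1 a2 a3 a4 (u + a1) v := by simp [psi21, F]
lemma act12 (a1 a2 a3 a4 u v : ℤ) :
    psi12 (F a1 a2 a3 a4 u v) = F a1 a2 a3 a4 (u + a2) v := by simp [psi12, F]
lemma act43 (a1 a2 a3 a4 u v : ℤ) :
    psi43 (F a1 a2 a3 a4 u v) = F a1 a2 a3 a4 (u + a3) v := by simp [psi43, F]
lemma act34 (a1 a2 a3 a4 u v : ℤ) :
    psi34 (F a1 a2 a3 a4 u v) = F a1 a2 a3 a4 (u + a4) v := by simp [psi34, F]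
lemma act41 (a1 a2 a3 a4 u v : ℤ) :
    psi41 (F a1 a2 a3 a4 u v) = F a1 a2 a3 a4 u (v + -a1) := by simp [psi41, F]; ring
lemma act32 (a1 a2 a3 a4 u v : ℤ) :
    psi32 (F a1 a2 a3 a4 u v) = F a1 a2 a3 a4 u (v + -a2) := by simp [psi32, F]; ring
lemma act23 (a1 a2 a3 a4 u v : ℤ) :
    psi23 (F a1 a2 a3 a4 u v) = F a1 a2 a3 a4 u (v + -a3) := by simp [psi23, F]; ring
lemma act14 (a1 a2 a3 a4 u v : ℤ) :
    psi14 (F a1 a2 a3 a4 u v) = F a1 a2 a3 a4 u (v + -a4) := by simp [psi14, F]; ring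

lemma mem21 : psi21 ∈ psiMoves := by simp [psiMoves]
lemma mem41 : psi41 ∈ psiMoves := by simp [psiMoves]
lemma mem12 : psi12 ∈ psiMoves := by simp [psiMoves]
lemma mem32 : psi32 ∈ psiMoves := by simp [psiMoves]
lemma mem43 : psi43 ∈ psiMoves := by simp [psiMoves]
lemma mem23 : psi23 ∈ psiMoves := by simp [psiMoves]
lemma mem34 : psi34 ∈ psiMoves := by simp [psiMoves]
lemma mem14 : psi14 ∈ psiMoves := by simp [psiMoves]

lemma bezout4 (a1 a2 a3 a4 d : ℤ)
    (h : (Int.gcd a1 (Int.gcd a2 (Int.gcd a3 a4)) : ℤ) ∣ d) :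
    ∃ k1 k2 k3 k4 : ℤ, d = k1 * a1 + k2 * a2 + k3 * a3 + k4 * a4 := by
  obtain ⟨m, rfl⟩ := h
  refine ⟨m * Int.gcdA a1 (Int.gcd a2 (Int.gcd a3 a4)),
      m * Int.gcdB a1 (Int.gcd a2 (Int.gcd a3 a4)) * Int.gcdA a2 (Int.gcd a3 a4),
      m * Int.gcdB a1 (Int.gcd a2 (Int.gcd a3 a4)) * Int.gcdB a2 (Int.gcd a3 a4) * Int.gcdA a3 a4,
      m * Int.gcdB a1 (Int.gcd a2 (Int.gcd a3 a4)) * Int.gcdB a2 (Int.gcd a3 a4) * Int.gcdB a3 a4,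
      ?_⟩
  rw [Int.gcd_eq_gcd_ab a1 (Int.gcd a2 (Int.gcd a3 a4)),
      Int.gcd_eq_gcd_ab a2 (Int.gcd a3 a4), Int.gcd_eq_gcd_ab a3 a4]
  ring

lemma reach (a1 a2 a3 a4 u v u' v' : ℤ)
    (h1 : ∃ k1 k2 k3 k4 : ℤ, u' - u = k1 * a1 + k2 * a2 + k3 * a3 + k4 * a4)
    (h2 : ∃ k1 k2 k3 k4 : ℤ, v' - v = k1 * a1 + k2 * a2 + k3 * a3 + k4 * a4) :
    PsiEquiv (F a1 a2 a3 a4 u v) (F a1 a2 a3 a4 u' v') := by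
  obtain ⟨k1, k2, k3, k4, hk⟩ := h1
  obtain ⟨l1, l2, l3, l4, hl⟩ := h2
  have s1 := shift1 a1 a2 a3 a4 mem21 a1 (act21 a1 a2 a3 a4) k1 u v
  have s2 := shift1 a1 a2 a3 a4 mem12 a2 (act12 a1 a2 a3 a4) k2 (u + k1 * a1) v
  have s3 := shift1 a1 a2 a3 a4 mem43 a3 (act43 a1 a2 a3 a4) k3 (u + k1 * a1 + k2 * a2) v
  have s4 := shift1 a1 a2 a3 a4 mem34 a4 (act34 a1 a2 a3 a4) k4 (u + k1 * a1 + k2 * a2 + k3 * a3) v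
  have hu : u + k1 * a1 + k2 * a2 + k3 * a3 + k4 * a4 = u' := by linear_combination -hk
  have t1 := shift2 a1 a2 a3 a4 mem41 (-a1) (act41 a1 a2 a3 a4) (-l1) u' v
  have t2 := shift2 a1 a2 a3 a4 mem32 (-a2) (act32 a1 a2 a3 a4) (-l2) u' (v + -l1 * -a1)
  have t3 := shift2 a1 a2 a3 a4 mem23 (-a3) (act23 a1 a2 a3 a4) (-l3) u' (v + -l1 * -a1 + -l2 * -a2)
  have t4 := shift2 a1 a2 a3 a4 mem14 (-a4) (act14 a1 a2 a3 a4) (-l4) u'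
      (v + -l1 * -a1 + -l2 * -a2 + -l3 * -a3)
  have hv : v + -l1 * -a1 + -l2 * -a2 + -l3 * -a3 + -l4 * -a4 = v' := by linear_combination -hl
  rw [hu] at s4
  rw [hv] at t4
  exact Relation.EqvGen.trans _ _ _
    (Relation.EqvGen.trans _ _ _ (Relation.EqvGen.trans _ _ _ s1 s2)
      (Relation.EqvGen.trans _ _ _ s3 s4))
    (Relation.EqvGen.trans _ _ _ (Relation.EqvGen.trans _ _ _ t1 t2)
      (Relation.EqvGen.trans _ _ _ t3 t4))

/-- Invariant preserved by the moves. -/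
def Inv (x y : Tuple) : Prop :=
  x.c1 = y.c1 ∧ x.c2 = y.c2 ∧ x.c3 = y.c3 ∧ x.c4 = y.c4 ∧ x.c5 = y.c5 ∧ x.c6 = y.c6 ∧
  ((x.c1 = 0 ∧ x.c2 = 0 ∧ x.c3 = 0 ∧ x.c4 = 0 ∧ x.c5 = 0 ∧ x.c6 = 0) →
    (x.f1 = y.f1 ∧ x.f2 = y.f2 ∧ x.f3 = y.f3 ∧ x.f4 = y.f4 ∧
      (Int.gcd x.f1 (Int.gcd x.f2 (Int.gcd x.f3 x.f4)) : ℤ) ∣ x.t1 - y.t1 ∧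
      (Int.gcd x.f1 (Int.gcd x.f2 (Int.gcd x.f3 x.f4)) : ℤ) ∣ x.t2 - y.t2))

lemma gdvd1 (a1 a2 a3 a4 : ℤ) : (Int.gcd a1 (Int.gcd a2 (Int.gcd a3 a4)) : ℤ) ∣ a1 :=
  Int.gcd_dvd_left _ _
lemma gdvd2 (a1 a2 a3 a4 : ℤ) : (Int.gcd a1 (Int.gcd a2 (Int.gcd a3 a4)) : ℤ) ∣ a2 :=
  dvd_trans (Int.gcd_dvd_right _ _) (Int.gcd_dvd_left _ _)
lemma gdvd3 (a1 a2 a3 a4 : ℤ) : (Int.gcd a1 (Int.gcd a2 (Int.gcd a3 a4)) : ℤ) ∣ a3 :=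
  dvd_trans (Int.gcd_dvd_right _ _) (dvd_trans (Int.gcd_dvd_right _ _) (Int.gcd_dvd_left _ _))
lemma gdvd4 (a1 a2 a3 a4 : ℤ) : (Int.gcd a1 (Int.gcd a2 (Int.gcd a3 a4)) : ℤ) ∣ a4 :=
  dvd_trans (Int.gcd_dvd_right _ _) (dvd_trans (Int.gcd_dvd_right _ _) (Int.gcd_dvd_right _ _))

lemma inv_of_move : ∀ g ∈ psiMoves, ∀ x : Tuple, Inv x (g x) := by
  intro g hg x
  rcases x with ⟨c1, c2, c3, c4, c5, c6, a1, a2, a3, a4, u, v⟩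
  simp only [psiMoves, List.mem_cons, List.not_mem_nil, or_false] at hg
  rcases hg with rfl | rfl | rfl | rfl | rfl | rfl | rfl | rfl <;>
    refine ⟨rfl, rfl, rfl, rfl, rfl, rfl, ?_⟩ <;>
    rintro ⟨rfl, rfl, rfl, rfl, rfl, rfl⟩ <;>
    simp [psi21, psi41, psi12, psi32, psi43, psi23, psi34, psi14, Inv,
      sub_add_cancel_left, sub_sub_cancel, dvd_neg, gdvd1, gdvd2, gdvd3, gdvd4]

lemma inv_refl (x : Tuple) : Inv x x :=
  ⟨rfl, rfl, rfl, rfl, rfl, rfl, fun _ => ⟨rfl, rfl, rfl, rfl, by simp, by simp⟩⟩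

lemma inv_symm {x y : Tuple} (h : Inv x y) : Inv y x := by
  obtain ⟨h1, h2, h3, h4, h5, h6, h7⟩ := h
  refine ⟨h1.symm, h2.symm, h3.symm, h4.symm, h5.symm, h6.symm, fun hc => ?_⟩
  rw [← h1, ← h2, ← h3, ← h4, ← h5, ← h6] at hc
  obtain ⟨e1, e2, e3, e4, d1, d2⟩ := h7 hc
  exact ⟨e1.symm, e2.symm, e3.symm, e4.symm,
    by rw [← e1, ← e2, ← e3, ← e4]; exact dvd_sub_comm.mp d1,
    by rw [← e1, ← e2, ← e3, ← e4]; exact dvd_sub_comm.mp d2⟩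

lemma inv_trans {x y z : Tuple} (hxy : Inv x y) (hyz : Inv y z) : Inv x z := by
  obtain ⟨h1, h2, h3, h4, h5, h6, h7⟩ := hxy
  obtain ⟨g1, g2, g3, g4, g5, g6, g7⟩ := hyz
  refine ⟨h1.trans g1, h2.trans g2, h3.trans g3, h4.trans g4, h5.trans g5, h6.trans g6,
    fun hc => ?_⟩
  obtain ⟨e1, e2, e3, e4, d1, d2⟩ := h7 hc
  have hc' : y.c1 = 0 ∧ y.c2 = 0 ∧ y.c3 = 0 ∧ y.c4 = 0 ∧ y.c5 = 0 ∧ y.c6 = 0 := by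
    rw [← h1, ← h2, ← h3, ← h4, ← h5, ← h6]; exact hc
  obtain ⟨e1', e2', e3', e4', d1', d2'⟩ := g7 hc'
  rw [← e1, ← e2, ← e3, ← e4] at d1' d2'
  exact ⟨e1.trans e1', e2.trans e2', e3.trans e3', e4.trans e4',
    by simpa using dvd_add d1 d1', by simpa using dvd_add d2 d2'⟩

lemma inv_of_psiEquiv {x y : Tuple} (h : PsiEquiv x y) : Inv x y := by
  induction h with
  | rel a b hab => obtain ⟨g, hg, rfl⟩ := hab; exact inv_of_move g hg a
  | refl a => exact inv_refl a
  | symm a b _ ih => exact inv_symm ih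
  | trans a b c _ _ ih1 ih2 => exact inv_trans ih1 ih2

end PsiAux

/-- Classification when all c-coordinates vanish: two such tuples are ψ-equivalent
iff the f-coordinates agree and t₁, t₂ agree modulo gcd(f₁,f₂,f₃,f₄) (where the
congruence modulo 0 means equality). -/
theorem classification_all_c_zero (f1 f2 f3 f4 t1 t2 f1' f2' f3' f4' t1' t2' : ℤ) :
    PsiEquiv ⟨0, 0, 0, 0, 0, 0, f1, f2, f3, f4, t1, t2⟩
        ⟨0, 0, 0, 0, 0, 0, f1', f2', f3', f4', t1', t2'⟩ ↔
      (f1 = f1' ∧ f2 = f2' ∧ f3 = f3' ∧ f4 = f4' ∧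
        (Int.gcd f1 (Int.gcd f2 (Int.gcd f3 f4)) : ℤ) ∣ t1 - t1' ∧
        (Int.gcd f1 (Int.gcd f2 (Int.gcd f3 f4)) : ℤ) ∣ t2 - t2') := by
  constructor
  · intro h
    have hinv := PsiAux.inv_of_psiEquiv h
    obtain ⟨-, -, -, -, -, -, h7⟩ := hinv
    exact h7 ⟨rfl, rfl, rfl, rfl, rfl, rfl⟩
  · rintro ⟨rfl, rfl, rfl, rfl, hd1, hd2⟩
    exact PsiAux.reach f1 f2 f3 f4 t1 t2 t1' t2'
      (PsiAux.bezout4 f1 f2 f3 f4 (t1' - t1) (dvd_sub_comm.mp hd1))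
      (PsiAux.bezout4 f1 f2 f3 f4 (t2' - t2) (dvd_sub_comm.mp hd2))
end

section
/- Let T = (0,0,c₃,0,0,c₆,f₁,f₂,f₃,f₄,t₁,t₂) and T′ = (0,0,c₃,0,0,c₆,f₁′,f₂′,f₃′,f₄′,t₁′,t₂′) be tuples in ℤ¹² with c₁ = c₂ = c₄ = c₅ = 0 and the same values c₃ ≠ 0 and c₆ ≠ 0. Then T and T′ are ψ-equivalent if and only if: f₁ ≡ f₁′ (mod c₆); f₂ ≡ f₂′ (mod c₆); f₃ ≡ f₃′ (mod c₃); f₄ ≡ f₄′ (mod c₃); t₁ ≡ t₁′ (mod gcd(c₃,c₆,f₁,f₂,f₃,f₄)); and c₃c₆t₂ + c₃f₁f₂ + c₆f₃f₄ = c₃c₆t₂′ + c₃f₁′f₂′ + c₆f₃′f₄′ (equality of integers). -/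
namespace PsiAux

/-- The quadratic invariant. -/
def Q (x : Tuple) : ℤ := x.c3*x.c6*x.t2 + x.c3*x.f1*x.f2 + x.c6*x.f3*x.f4

/-- c₁=c₂=c₄=c₅=0. -/
def Zc (x : Tuple) : Prop := x.c1 = 0 ∧ x.c2 = 0 ∧ x.c4 = 0 ∧ x.c5 = 0

/-- Invariant relation. -/
def R (x y : Tuple) : Prop :=
  x.c1 = y.c1 ∧ x.c2 = y.c2 ∧ x.c3 = y.c3 ∧ x.c4 = y.c4 ∧ x.c5 = y.c5 ∧ x.c6 = y.c6 ∧
  (Zc x →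
    x.c6 ∣ x.f1 - y.f1 ∧ x.c6 ∣ x.f2 - y.f2 ∧ x.c3 ∣ x.f3 - y.f3 ∧ x.c3 ∣ x.f4 - y.f4 ∧
    (∃ a b u v w s : ℤ,
      x.t1 - y.t1 = a*x.c3 + b*x.c6 + u*x.f1 + v*x.f2 + w*x.f3 + s*x.f4) ∧
    Q x = Q y)

lemma R_refl (x : Tuple) : R x x :=
  ⟨rfl, rfl, rfl, rfl, rfl, rfl, fun _ => by
    refine ⟨⟨0, by ring⟩, ⟨0, by ring⟩, ⟨0, by ring⟩, ⟨0, by ring⟩,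
      ⟨0,0,0,0,0,0, by ring⟩, rfl⟩⟩

lemma R_symm {x y : Tuple} (h : R x y) : R y x := by
  obtain ⟨h1, h2, h3, h4, h5, h6, hz⟩ := h
  refine ⟨h1.symm, h2.symm, h3.symm, h4.symm, h5.symm, h6.symm, fun hy => ?_⟩
  have hx : Zc x := ⟨h1.trans hy.1, h2.trans hy.2.1, h4.trans hy.2.2.1, h5.trans hy.2.2.2⟩
  obtain ⟨⟨k1, hk1⟩, ⟨k2, hk2⟩, ⟨k3, hk3⟩, ⟨k4, hk4⟩, ⟨a,b,u,v,w,s,hc⟩, hq⟩ := hz hx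
  refine ⟨⟨-k1, by rw [← h6]; linarith⟩, ⟨-k2, by rw [← h6]; linarith⟩,
    ⟨-k3, by rw [← h3]; linarith⟩, ⟨-k4, by rw [← h3]; linarith⟩,
    ⟨-(a + w*k3 + s*k4), -(b + u*k1 + v*k2), -u, -v, -w, -s, ?_⟩, hq.symm⟩
  rw [← h3, ← h6]
  linear_combination (-1 : ℤ)*hc - u*hk1 - v*hk2 - w*hk3 - s*hk4

lemma R_trans {x y z : Tuple} (hxy : R x y) (hyz : R y z) : R x z := by
  obtain ⟨h1, h2, h3, h4, h5, h6, hzx⟩ := hxy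
  obtain ⟨g1, g2, g3, g4, g5, g6, hzy⟩ := hyz
  refine ⟨h1.trans g1, h2.trans g2, h3.trans g3, h4.trans g4, h5.trans g5, h6.trans g6,
    fun hx => ?_⟩
  have hy : Zc y := ⟨h1 ▸ hx.1, h2 ▸ hx.2.1, h4 ▸ hx.2.2.1, h5 ▸ hx.2.2.2⟩
  obtain ⟨⟨k1, hk1⟩, ⟨k2, hk2⟩, ⟨k3, hk3⟩, ⟨k4, hk4⟩, ⟨a,b,u,v,w,s,hc⟩, hq⟩ := hzx hx
  obtain ⟨⟨m1, hm1⟩, ⟨m2, hm2⟩, ⟨m3, hm3⟩, ⟨m4, hm4⟩, ⟨a',b',u',v',w',s',hc'⟩, hq'⟩ := hzy hy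
  refine ⟨⟨k1 + m1, by rw [h6] at hk1 ⊢; linarith⟩,
    ⟨k2 + m2, by rw [h6] at hk2 ⊢; linarith⟩,
    ⟨k3 + m3, by rw [h3] at hk3 ⊢; linarith⟩,
    ⟨k4 + m4, by rw [h3] at hk4 ⊢; linarith⟩,
    ⟨a + a' - w'*k3 - s'*k4, b + b' - u'*k1 - v'*k2, u + u', v + v', w + w', s + s', ?_⟩,
    hq.trans hq'⟩
  rw [← h3, ← h6] at hc'
  linear_combination hc + hc' - u'*hk1 - v'*hk2 - w'*hk3 - s'*hk4

lemma R_step {x y : Tuple} (h : ∃ g ∈ psiMoves, g x = y) : R x y := by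
  obtain ⟨g, hg, rfl⟩ := h
  obtain ⟨c1, c2, c3, c4, c5, c6, f1, f2, f3, f4, t1, t2⟩ := x
  simp only [psiMoves, List.mem_cons, List.not_mem_nil, or_false] at hg
  rcases hg with rfl | rfl | rfl | rfl | rfl | rfl | rfl | rfl <;>
      (refine ⟨rfl, rfl, rfl, rfl, rfl, rfl, ?_⟩
       rintro ⟨rfl, rfl, rfl, rfl⟩
       simp only [psi21, psi41, psi12, psi32, psi43, psi23, psi34, psi14,
         Equiv.coe_fn_mk, Q])
  · exact ⟨⟨0, by ring⟩, ⟨0, by ring⟩, ⟨0, by ring⟩, ⟨0, by ring⟩,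
      ⟨0,0,-1,0,0,0, by ring⟩, by ring⟩
  · exact ⟨⟨0, by ring⟩, ⟨-1, by ring⟩, ⟨0, by ring⟩, ⟨0, by ring⟩,
      ⟨0,0,0,0,0,0, by ring⟩, by ring⟩
  · exact ⟨⟨0, by ring⟩, ⟨0, by ring⟩, ⟨0, by ring⟩, ⟨0, by ring⟩,
      ⟨0,0,0,-1,0,0, by ring⟩, by ring⟩
  · exact ⟨⟨-1, by ring⟩, ⟨0, by ring⟩, ⟨0, by ring⟩, ⟨0, by ring⟩,
      ⟨0,0,0,0,0,0, by ring⟩, by ring⟩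
  · exact ⟨⟨0, by ring⟩, ⟨0, by ring⟩, ⟨0, by ring⟩, ⟨0, by ring⟩,
      ⟨0,0,0,0,-1,0, by ring⟩, by ring⟩
  · exact ⟨⟨0, by ring⟩, ⟨0, by ring⟩, ⟨0, by ring⟩, ⟨-1, by ring⟩,
      ⟨0,0,0,0,0,0, by ring⟩, by ring⟩
  · exact ⟨⟨0, by ring⟩, ⟨0, by ring⟩, ⟨0, by ring⟩, ⟨0, by ring⟩,
      ⟨0,0,0,0,0,-1, by ring⟩, by ring⟩
  · exact ⟨⟨0, by ring⟩, ⟨0, by ring⟩, ⟨-1, by ring⟩, ⟨0, by ring⟩,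
      ⟨0,0,0,0,0,0, by ring⟩, by ring⟩

lemma psi_invariant {x y : Tuple} (h : PsiEquiv x y) : R x y := by
  induction h with
  | rel a b hab => exact R_step hab
  | refl a => exact R_refl a
  | symm a b _ ih => exact R_symm ih
  | trans a b c _ _ ih1 ih2 => exact R_trans ih1 ih2

/-! ### Construction side -/

variable (C3 C6 : ℤ)

/-- The special tuples appearing in the classification. -/
def mkT (f1 f2 f3 f4 t1 t2 : ℤ) : Tuple := ⟨0, 0, C3, 0, 0, C6, f1, f2, f3, f4, t1, t2⟩

lemma step (g : Equiv.Perm Tuple) (hg : g ∈ psiMoves) (x : Tuple) : PsiEquiv x (g x) :=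
  Relation.EqvGen.rel _ _ ⟨g, hg, rfl⟩

lemma ptrans {x y z : Tuple} (h : PsiEquiv x y) (h2 : PsiEquiv y z) : PsiEquiv x z :=
  Relation.EqvGen.trans _ _ _ h h2

lemma psymm {x y : Tuple} (h : PsiEquiv x y) : PsiEquiv y x :=
  Relation.EqvGen.symm _ _ h

lemma prefl (x : Tuple) : PsiEquiv x x := Relation.EqvGen.refl x

lemma mkT_ext {a1 a2 a3 a4 a5 a6 b1 b2 b3 b4 b5 b6 : ℤ}
    (h1 : a1 = b1) (h2 : a2 = b2) (h3 : a3 = b3) (h4 : a4 = b4) (h5 : a5 = b5)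
    (h6 : a6 = b6) : mkT C3 C6 a1 a2 a3 a4 a5 a6 = mkT C3 C6 b1 b2 b3 b4 b5 b6 := by
  rw [h1, h2, h3, h4, h5, h6]

-- single applications of the moves at a special tuple
lemma ap32 (f1 f2 f3 f4 t1 t2 : ℤ) :
    PsiEquiv (mkT C3 C6 f1 f2 f3 f4 t1 t2) (mkT C3 C6 (f1 + C6) f2 f3 (f4 - 0) t1 (t2 - f2)) :=
  by exact step psi32 (by simp [psiMoves]) _

lemma ap41 (f1 f2 f3 f4 t1 t2 : ℤ) :
    PsiEquiv (mkT C3 C6 f1 f2 f3 f4 t1 t2) (mkT C3 C6 f1 (f2 + C6) (f3 - 0) f4 t1 (t2 - f1)) :=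
  by exact step psi41 (by simp [psiMoves]) _

lemma ap14 (f1 f2 f3 f4 t1 t2 : ℤ) :
    PsiEquiv (mkT C3 C6 f1 f2 f3 f4 t1 t2) (mkT C3 C6 f1 (f2 - 0) (f3 + C3) f4 t1 (t2 - f4)) :=
  by exact step psi14 (by simp [psiMoves]) _

lemma ap23 (f1 f2 f3 f4 t1 t2 : ℤ) :
    PsiEquiv (mkT C3 C6 f1 f2 f3 f4 t1 t2) (mkT C3 C6 (f1 - 0) f2 f3 (f4 + C3) t1 (t2 - f3)) :=
  by exact step psi23 (by simp [psiMoves]) _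

lemma ap21 (f1 f2 f3 f4 t1 t2 : ℤ) :
    PsiEquiv (mkT C3 C6 f1 f2 f3 f4 t1 t2) (mkT C3 C6 f1 f2 (f3 + 0) (f4 - 0) (t1 + f1) t2) :=
  by exact step psi21 (by simp [psiMoves]) _

lemma ap12 (f1 f2 f3 f4 t1 t2 : ℤ) :
    PsiEquiv (mkT C3 C6 f1 f2 f3 f4 t1 t2) (mkT C3 C6 f1 f2 (f3 - 0) (f4 + 0) (t1 + f2) t2) :=
  by exact step psi12 (by simp [psiMoves]) _

lemma ap43 (f1 f2 f3 f4 t1 t2 : ℤ) :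
    PsiEquiv (mkT C3 C6 f1 f2 f3 f4 t1 t2) (mkT C3 C6 (f1 + 0) (f2 - 0) f3 f4 (t1 + f3) t2) :=
  by exact step psi43 (by simp [psiMoves]) _

lemma ap34 (f1 f2 f3 f4 t1 t2 : ℤ) :
    PsiEquiv (mkT C3 C6 f1 f2 f3 f4 t1 t2) (mkT C3 C6 (f1 - 0) (f2 + 0) f3 f4 (t1 + f4) t2) :=
  by exact step psi34 (by simp [psiMoves]) _

lemma trans_eq {x y z : Tuple} (h : PsiEquiv x y) (e : y = z) : PsiEquiv x z := e ▸ h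

-- iterated moves
lemma L32 (f1 f2 f3 f4 t1 t2 n : ℤ) :
    PsiEquiv (mkT C3 C6 f1 f2 f3 f4 t1 t2) (mkT C3 C6 (f1 + n*C6) f2 f3 f4 t1 (t2 - n*f2)) := by
  induction n using Int.induction_on with
  | zero => exact trans_eq (prefl _) (mkT_ext _ _ (by ring) (by ring) (by ring) (by ring) (by ring) (by ring))
  | succ k ih =>
      refine ptrans ih (trans_eq (ap32 C3 C6 _ _ _ _ _ _)
        (mkT_ext _ _ (by ring) (by ring) (by ring) (by ring) (by ring) (by ring)))
  | pred k ih =>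
      refine ptrans ih (psymm (trans_eq (ap32 C3 C6 _ _ _ _ _ _)
        (mkT_ext _ _ (by ring) (by ring) (by ring) (by ring) (by ring) (by ring))))

lemma L41 (f1 f2 f3 f4 t1 t2 n : ℤ) :
    PsiEquiv (mkT C3 C6 f1 f2 f3 f4 t1 t2) (mkT C3 C6 f1 (f2 + n*C6) f3 f4 t1 (t2 - n*f1)) := by
  induction n using Int.induction_on with
  | zero => exact trans_eq (prefl _) (mkT_ext _ _ (by ring) (by ring) (by ring) (by ring) (by ring) (by ring))
  | succ k ih =>
      refine ptrans ih (trans_eq (ap41 C3 C6 _ _ _ _ _ _)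
        (mkT_ext _ _ (by ring) (by ring) (by ring) (by ring) (by ring) (by ring)))
  | pred k ih =>
      refine ptrans ih (psymm (trans_eq (ap41 C3 C6 _ _ _ _ _ _)
        (mkT_ext _ _ (by ring) (by ring) (by ring) (by ring) (by ring) (by ring))))

lemma L14 (f1 f2 f3 f4 t1 t2 n : ℤ) :
    PsiEquiv (mkT C3 C6 f1 f2 f3 f4 t1 t2) (mkT C3 C6 f1 f2 (f3 + n*C3) f4 t1 (t2 - n*f4)) := by
  induction n using Int.induction_on with
  | zero => exact trans_eq (prefl _) (mkT_ext _ _ (by ring) (by ring) (by ring) (by ring) (by ring) (by ring))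
  | succ k ih =>
      refine ptrans ih (trans_eq (ap14 C3 C6 _ _ _ _ _ _)
        (mkT_ext _ _ (by ring) (by ring) (by ring) (by ring) (by ring) (by ring)))
  | pred k ih =>
      refine ptrans ih (psymm (trans_eq (ap14 C3 C6 _ _ _ _ _ _)
        (mkT_ext _ _ (by ring) (by ring) (by ring) (by ring) (by ring) (by ring))))

lemma L23 (f1 f2 f3 f4 t1 t2 n : ℤ) :
    PsiEquiv (mkT C3 C6 f1 f2 f3 f4 t1 t2) (mkT C3 C6 f1 f2 f3 (f4 + n*C3) t1 (t2 - n*f3)) := by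
  induction n using Int.induction_on with
  | zero => exact trans_eq (prefl _) (mkT_ext _ _ (by ring) (by ring) (by ring) (by ring) (by ring) (by ring))
  | succ k ih =>
      refine ptrans ih (trans_eq (ap23 C3 C6 _ _ _ _ _ _)
        (mkT_ext _ _ (by ring) (by ring) (by ring) (by ring) (by ring) (by ring)))
  | pred k ih =>
      refine ptrans ih (psymm (trans_eq (ap23 C3 C6 _ _ _ _ _ _)
        (mkT_ext _ _ (by ring) (by ring) (by ring) (by ring) (by ring) (by ring))))

lemma L21 (f1 f2 f3 f4 t1 t2 n : ℤ) :
    PsiEquiv (mkT C3 C6 f1 f2 f3 f4 t1 t2) (mkT C3 C6 f1 f2 f3 f4 (t1 + n*f1) t2) := by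
  induction n using Int.induction_on with
  | zero => exact trans_eq (prefl _) (mkT_ext _ _ (by ring) (by ring) (by ring) (by ring) (by ring) (by ring))
  | succ k ih =>
      refine ptrans ih (trans_eq (ap21 C3 C6 _ _ _ _ _ _)
        (mkT_ext _ _ (by ring) (by ring) (by ring) (by ring) (by ring) (by ring)))
  | pred k ih =>
      refine ptrans ih (psymm (trans_eq (ap21 C3 C6 _ _ _ _ _ _)
        (mkT_ext _ _ (by ring) (by ring) (by ring) (by ring) (by ring) (by ring))))

lemma L12 (f1 f2 f3 f4 t1 t2 n : ℤ) :
    PsiEquiv (mkT C3 C6 f1 f2 f3 f4 t1 t2) (mkT C3 C6 f1 f2 f3 f4 (t1 + n*f2) t2) := by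
  induction n using Int.induction_on with
  | zero => exact trans_eq (prefl _) (mkT_ext _ _ (by ring) (by ring) (by ring) (by ring) (by ring) (by ring))
  | succ k ih =>
      refine ptrans ih (trans_eq (ap12 C3 C6 _ _ _ _ _ _)
        (mkT_ext _ _ (by ring) (by ring) (by ring) (by ring) (by ring) (by ring)))
  | pred k ih =>
      refine ptrans ih (psymm (trans_eq (ap12 C3 C6 _ _ _ _ _ _)
        (mkT_ext _ _ (by ring) (by ring) (by ring) (by ring) (by ring) (by ring))))

lemma L43 (f1 f2 f3 f4 t1 t2 n : ℤ) :
    PsiEquiv (mkT C3 C6 f1 f2 f3 f4 t1 t2) (mkT C3 C6 f1 f2 f3 f4 (t1 + n*f3) t2) := by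
  induction n using Int.induction_on with
  | zero => exact trans_eq (prefl _) (mkT_ext _ _ (by ring) (by ring) (by ring) (by ring) (by ring) (by ring))
  | succ k ih =>
      refine ptrans ih (trans_eq (ap43 C3 C6 _ _ _ _ _ _)
        (mkT_ext _ _ (by ring) (by ring) (by ring) (by ring) (by ring) (by ring)))
  | pred k ih =>
      refine ptrans ih (psymm (trans_eq (ap43 C3 C6 _ _ _ _ _ _)
        (mkT_ext _ _ (by ring) (by ring) (by ring) (by ring) (by ring) (by ring))))

lemma L34 (f1 f2 f3 f4 t1 t2 n : ℤ) :
    PsiEquiv (mkT C3 C6 f1 f2 f3 f4 t1 t2) (mkT C3 C6 f1 f2 f3 f4 (t1 + n*f4) t2) := by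
  induction n using Int.induction_on with
  | zero => exact trans_eq (prefl _) (mkT_ext _ _ (by ring) (by ring) (by ring) (by ring) (by ring) (by ring))
  | succ k ih =>
      refine ptrans ih (trans_eq (ap34 C3 C6 _ _ _ _ _ _)
        (mkT_ext _ _ (by ring) (by ring) (by ring) (by ring) (by ring) (by ring)))
  | pred k ih =>
      refine ptrans ih (psymm (trans_eq (ap34 C3 C6 _ _ _ _ _ _)
        (mkT_ext _ _ (by ring) (by ring) (by ring) (by ring) (by ring) (by ring))))

/-- t₁ can be shifted by any multiple of C6. -/
lemma Lc6 (f1 f2 f3 f4 t1 t2 n : ℤ) :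
    PsiEquiv (mkT C3 C6 f1 f2 f3 f4 t1 t2) (mkT C3 C6 f1 f2 f3 f4 (t1 + n*C6) t2) := by
  refine (ptrans (L32 C3 C6 f1 f2 f3 f4 t1 t2 n)
    (ptrans (L21 C3 C6 _ _ _ _ _ _ 1)
    (ptrans (L32 C3 C6 _ _ _ _ _ _ (-n))
    (trans_eq (L21 C3 C6 _ _ _ _ _ _ (-1))
      (mkT_ext _ _ (by ring) (by ring) (by ring) (by ring) (by ring) (by ring))))))

/-- t₁ can be shifted by any multiple of C3. -/
lemma Lc3 (f1 f2 f3 f4 t1 t2 n : ℤ) :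
    PsiEquiv (mkT C3 C6 f1 f2 f3 f4 t1 t2) (mkT C3 C6 f1 f2 f3 f4 (t1 + n*C3) t2) := by
  refine (ptrans (L14 C3 C6 f1 f2 f3 f4 t1 t2 n)
    (ptrans (L43 C3 C6 _ _ _ _ _ _ 1)
    (ptrans (L14 C3 C6 _ _ _ _ _ _ (-n))
    (trans_eq (L43 C3 C6 _ _ _ _ _ _ (-1))
      (mkT_ext _ _ (by ring) (by ring) (by ring) (by ring) (by ring) (by ring))))))

/-- t₁ can be shifted by any combination. -/
lemma Lcomb (f1 f2 f3 f4 t1 t2 a b u v w s : ℤ) :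
    PsiEquiv (mkT C3 C6 f1 f2 f3 f4 t1 t2)
      (mkT C3 C6 f1 f2 f3 f4 (t1 + (a*C3 + b*C6 + u*f1 + v*f2 + w*f3 + s*f4)) t2) := by
  refine (ptrans (Lc3 C3 C6 f1 f2 f3 f4 t1 t2 a)
    (ptrans (Lc6 C3 C6 _ _ _ _ _ _ b)
    (ptrans (L21 C3 C6 _ _ _ _ _ _ u)
    (ptrans (L12 C3 C6 _ _ _ _ _ _ v)
    (ptrans (L43 C3 C6 _ _ _ _ _ _ w)
    (trans_eq (L34 C3 C6 _ _ _ _ _ _ s)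
      (mkT_ext _ _ (by ring) (by ring) (by ring) (by ring) (by ring) (by ring))))))))

/-- Bezout for `Int.gcd`. -/
lemma bez (a b : ℤ) : ∃ u v : ℤ, (Int.gcd a b : ℤ) = a*u + b*v :=
  ⟨Int.gcdA a b, Int.gcdB a b, Int.gcd_eq_gcd_ab a b⟩

/-- The nested gcd of six integers divides each of them. -/
lemma gcd6 (a b c d e f : ℤ) :
    ((Int.gcd a (Int.gcd b (Int.gcd c (Int.gcd d (Int.gcd e f)))) : ℤ) ∣ a) ∧
    ((Int.gcd a (Int.gcd b (Int.gcd c (Int.gcd d (Int.gcd e f)))) : ℤ) ∣ b) ∧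
    ((Int.gcd a (Int.gcd b (Int.gcd c (Int.gcd d (Int.gcd e f)))) : ℤ) ∣ c) ∧
    ((Int.gcd a (Int.gcd b (Int.gcd c (Int.gcd d (Int.gcd e f)))) : ℤ) ∣ d) ∧
    ((Int.gcd a (Int.gcd b (Int.gcd c (Int.gcd d (Int.gcd e f)))) : ℤ) ∣ e) ∧
    ((Int.gcd a (Int.gcd b (Int.gcd c (Int.gcd d (Int.gcd e f)))) : ℤ) ∣ f) := by
  have r1 : ((Int.gcd a (Int.gcd b (Int.gcd c (Int.gcd d (Int.gcd e f)))) : ℤ) ∣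
      (Int.gcd b (Int.gcd c (Int.gcd d (Int.gcd e f))) : ℤ)) := (Int.gcd_dvd_right _ _)
  have r2 : ((Int.gcd b (Int.gcd c (Int.gcd d (Int.gcd e f))) : ℤ) ∣
      (Int.gcd c (Int.gcd d (Int.gcd e f)) : ℤ)) := (Int.gcd_dvd_right _ _)
  have r3 : ((Int.gcd c (Int.gcd d (Int.gcd e f)) : ℤ) ∣
      (Int.gcd d (Int.gcd e f) : ℤ)) := (Int.gcd_dvd_right _ _)
  have r4 : ((Int.gcd d (Int.gcd e f) : ℤ) ∣ (Int.gcd e f : ℤ)) := (Int.gcd_dvd_right _ _)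
  exact ⟨(Int.gcd_dvd_left _ _), r1.trans (Int.gcd_dvd_left _ _),
    (r1.trans r2).trans (Int.gcd_dvd_left _ _),
    ((r1.trans r2).trans r3).trans (Int.gcd_dvd_left _ _),
    (((r1.trans r2).trans r3).trans r4).trans (Int.gcd_dvd_left _ _),
    (((r1.trans r2).trans r3).trans r4).trans (Int.gcd_dvd_right _ _)⟩

end PsiAux

/-- Classification when c₁ = c₂ = c₄ = c₅ = 0 and c₃, c₆ ≠ 0: two such tuples are
ψ-equivalent iff f₁ ≡ f₁′ (mod c₆), f₂ ≡ f₂′ (mod c₆), f₃ ≡ f₃′ (mod c₃),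
f₄ ≡ f₄′ (mod c₃), t₁ ≡ t₁′ (mod gcd(c₃,c₆,f₁,f₂,f₃,f₄)), and
c₃c₆t₂+c₃f₁f₂+c₆f₃f₄ = c₃c₆t₂′+c₃f₁′f₂′+c₆f₃′f₄′ as integers. -/
theorem classification_c3_c6 (c3 c6 f1 f2 f3 f4 t1 t2 f1' f2' f3' f4' t1' t2' : ℤ)
    (hc3 : c3 ≠ 0) (hc6 : c6 ≠ 0) :
    PsiEquiv ⟨0, 0, c3, 0, 0, c6, f1, f2, f3, f4, t1, t2⟩
        ⟨0, 0, c3, 0, 0, c6, f1', f2', f3', f4', t1', t2'⟩ ↔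
      (c6 ∣ f1 - f1' ∧
        c6 ∣ f2 - f2' ∧
        c3 ∣ f3 - f3' ∧
        c3 ∣ f4 - f4' ∧
        (Int.gcd c3 (Int.gcd c6 (Int.gcd f1 (Int.gcd f2 (Int.gcd f3 f4)))) : ℤ) ∣
          t1 - t1' ∧
        c3 * c6 * t2 + c3 * f1 * f2 + c6 * f3 * f4 =
          c3 * c6 * t2' + c3 * f1' * f2' + c6 * f3' * f4') := by
  constructor
  · intro h
    have hR := PsiAux.psi_invariant h
    obtain ⟨-, -, -, -, -, -, hz⟩ := hR
    obtain ⟨hd1, hd2, hd3, hd4, ⟨a, b, u, v, w, s, hc⟩, hq⟩ := hz ⟨rfl, rfl, rfl, rfl⟩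
    refine ⟨hd1, hd2, hd3, hd4, ?_, hq⟩
    have hc' : t1 - t1' = a*c3 + b*c6 + u*f1 + v*f2 + w*f3 + s*f4 := hc
    rw [hc']
    obtain ⟨g3, g6, gf1, gf2, gf3, gf4⟩ := PsiAux.gcd6 c3 c6 f1 f2 f3 f4
    exact dvd_add (dvd_add (dvd_add (dvd_add (dvd_add
      (g3.mul_left a) (g6.mul_left b)) (gf1.mul_left u)) (gf2.mul_left v))
      (gf3.mul_left w)) (gf4.mul_left s)
  · rintro ⟨⟨k1, hk1⟩, ⟨k2, hk2⟩, ⟨k3, hk3⟩, ⟨k4, hk4⟩, hd5, hQ⟩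
    have e1 : f1' = f1 + (-k1)*c6 := by linear_combination -hk1
    have e2 : f2' = f2 + (-k2)*c6 := by linear_combination -hk2
    have e3 : f3' = f3 + (-k3)*c3 := by linear_combination -hk3
    have e4 : f4' = f4 + (-k4)*c3 := by linear_combination -hk4
    subst e1; subst e2; subst e3; subst e4
    obtain ⟨m, hm⟩ := hd5
    obtain ⟨u1, v1, h1⟩ :=
      PsiAux.bez c3 (Int.gcd c6 (Int.gcd f1 (Int.gcd f2 (Int.gcd f3 f4))))
    obtain ⟨u2, v2, h2⟩ := PsiAux.bez c6 (Int.gcd f1 (Int.gcd f2 (Int.gcd f3 f4)))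
    obtain ⟨u3, v3, h3⟩ := PsiAux.bez f1 (Int.gcd f2 (Int.gcd f3 f4))
    obtain ⟨u4, v4, h4⟩ := PsiAux.bez f2 (Int.gcd f3 f4)
    obtain ⟨u5, v5, h5⟩ := PsiAux.bez f3 f4
    show PsiEquiv (PsiAux.mkT c3 c6 f1 f2 f3 f4 t1 t2)
      (PsiAux.mkT c3 c6 (f1 + (-k1)*c6) (f2 + (-k2)*c6) (f3 + (-k3)*c3) (f4 + (-k4)*c3) t1' t2')
    refine PsiAux.ptrans (PsiAux.L32 c3 c6 f1 f2 f3 f4 t1 t2 (-k1)) ?_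
    refine PsiAux.ptrans (PsiAux.L41 c3 c6 _ _ _ _ _ _ (-k2)) ?_
    refine PsiAux.ptrans (PsiAux.L14 c3 c6 _ _ _ _ _ _ (-k3)) ?_
    refine PsiAux.ptrans (PsiAux.L23 c3 c6 _ _ _ _ _ _ (-k4)) ?_
    refine PsiAux.trans_eq
      (PsiAux.Lcomb c3 c6 _ _ _ _ _ _
        (-(m*u1) + (-(m*(v1*(v2*(v3*(v4*u5))))))*k3 + (-(m*(v1*(v2*(v3*(v4*v5))))))*k4)
        (-(m*(v1*u2)) + (-(m*(v1*(v2*u3))))*k1 + (-(m*(v1*(v2*(v3*u4)))))*k2)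
        (-(m*(v1*(v2*u3)))) (-(m*(v1*(v2*(v3*u4)))))
        (-(m*(v1*(v2*(v3*(v4*u5)))))) (-(m*(v1*(v2*(v3*(v4*v5)))))))
      (PsiAux.mkT_ext _ _ rfl rfl rfl rfl ?_ ?_)
    · linear_combination hm + m*h1 + (m*v1)*h2 + (m*(v1*v2))*h3 +
        (m*(v1*(v2*v3)))*h4 + (m*(v1*(v2*(v3*v4))))*h5
    · apply mul_left_cancel₀ (mul_ne_zero hc3 hc6)
      linear_combination hQ
end
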